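/- Let X be any real random variable with half-space depth q(x) = min{P(X ≤ x), P(X ≥ x)}. For every p ∈ (−1, 0), one has 1 ≤ E[q(X)^p] ≤ (2^p (p+1))^{-1}. -/

import Mathlib

open MeasureTheory Set

/-- One-dimensional half-space depth of a random variable `X` (defined on `(Ω, ℙ)`):
`q(x) = min {P(X ≤ x), P(X ≥ x)}`. -/
noncomputable def depth1 {Ω : Type*} [MeasurableSpace Ω] (ℙ : Measure Ω) (X : Ω → ℝ)
    (x : ℝ) : ℝ :=
  min (ℙ {ω | X ω ≤ x}).toReal (ℙ {ω | x ≤ X ω}).toReal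

/-- The cdf evaluated at the random variable stochastically dominates `U(0,1)`. -/
lemma meas_cdf_lt {Ω : Type*} [MeasurableSpace Ω] (ℙ : Measure Ω) [IsProbabilityMeasure ℙ]
    (Y : Ω → ℝ) (t : ℝ) :
    ℙ {ω | (ℙ {ω' | Y ω' ≤ Y ω}).toReal < t} ≤ ENNReal.ofReal t := by
  set F : ℝ → ℝ := fun x => (ℙ {ω' | Y ω' ≤ x}).toReal with hF
  have hFmono : Monotone F := by
    intro x y hxy
    exact ENNReal.toReal_mono (measure_ne_top _ _)
      (measure_mono fun ω' (h : Y ω' ≤ x) => h.trans hxy)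
  have hfin : ∀ x, ℙ {ω' | Y ω' ≤ x} ≠ ⊤ := fun x => measure_ne_top _ _
  show ℙ {ω | F (Y ω) < t} ≤ ENNReal.ofReal t
  rcases le_or_gt 1 t with ht1 | ht1
  · refine le_trans (measure_mono (subset_univ _)) ?_
    rw [measure_univ, show (1 : ENNReal) = ENNReal.ofReal 1 by simp]
    exact ENNReal.ofReal_le_ofReal ht1
  rcases le_or_gt t 0 with ht0 | ht0
  · have : {ω | F (Y ω) < t} = ∅ := by
      ext ω; simp only [mem_setOf_eq, mem_empty_iff_false, iff_false, not_lt]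
      exact ht0.trans ENNReal.toReal_nonneg
    rw [this]; simp
  -- now 0 < t < 1
  set A : Set ℝ := {x | F x < t} with hA
  rcases eq_empty_or_nonempty A with hAe | hAne
  · have : {ω | F (Y ω) < t} = ∅ := by
      ext ω
      simp only [mem_setOf_eq, mem_empty_iff_false, iff_false]
      exact eq_empty_iff_forall_notMem.mp hAe (Y ω)
    rw [this]; simp
  -- A is bounded above
  have hbdd : BddAbove A := by
    have htend : Filter.Tendsto (fun n : ℕ => ℙ {ω' | Y ω' ≤ (n : ℝ)}) Filter.atTop
        (nhds (ℙ (⋃ n : ℕ, {ω' | Y ω' ≤ (n : ℝ)}))) := by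
      exact tendsto_measure_iUnion_atTop
        (fun n m hnm ω' (h : Y ω' ≤ (n : ℝ)) => h.trans (by exact_mod_cast hnm))
    have hU : (⋃ n : ℕ, {ω' | Y ω' ≤ (n : ℝ)}) = Set.univ := by
      ext ω'; simp only [mem_iUnion, mem_setOf_eq, mem_univ, iff_true]
      exact exists_nat_ge (Y ω')
    rw [hU, measure_univ] at htend
    have hlt : ENNReal.ofReal t < 1 := by
      rw [show (1 : ENNReal) = ENNReal.ofReal 1 by simp]
      exact ENNReal.ofReal_lt_ofReal_iff_of_nonneg ht0.le |>.mpr ht1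
    obtain ⟨n, hn⟩ := (htend.eventually_const_lt hlt).exists
    refine ⟨(n : ℝ), fun x hx => ?_⟩
    by_contra hxn
    push_neg at hxn
    have hFnt : F (n : ℝ) < t := lt_of_le_of_lt (hFmono hxn.le) hx
    have hle : ℙ {ω' | Y ω' ≤ (n : ℝ)} ≤ ENNReal.ofReal t :=
      (ENNReal.le_ofReal_iff_toReal_le (hfin _) ht0.le).mpr hFnt.le
    exact absurd hn (not_lt.mpr hle)
  set s : ℝ := sSup A with hs
  have hAsub : A ⊆ Iic s := fun x hx => le_csSup hbdd hx
  have hIioA : Iio s ⊆ A := by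
    intro x hx
    obtain ⟨a, ha, hxa⟩ := exists_lt_of_lt_csSup hAne hx
    exact lt_of_le_of_lt (hFmono hxa.le) ha
  by_cases hsA : F s < t
  · -- A = Iic s
    have hset : {ω | F (Y ω) < t} = {ω | Y ω ≤ s} := by
      ext ω
      simp only [mem_setOf_eq]
      constructor
      · exact fun h => hAsub h
      · exact fun h => lt_of_le_of_lt (hFmono h) hsA
    rw [hset]
    exact (ENNReal.le_ofReal_iff_toReal_le (hfin s) ht0.le).mpr hsA.le
  · -- A = Iio s
    push_neg at hsA
    have hset : {ω | F (Y ω) < t} = {ω | Y ω < s} := by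
      ext ω
      simp only [mem_setOf_eq]
      constructor
      · intro h
        rcases lt_or_eq_of_le (mem_Iic.mp (hAsub h)) with h' | h'
        · exact h'
        · exact absurd (h' ▸ h) (not_lt.mpr hsA)
      · exact fun h => hIioA h
    rw [hset]
    have hunion : {ω | Y ω < s} = ⋃ n : ℕ, {ω | Y ω ≤ s - 1 / (n + 1)} := by
      ext ω
      simp only [mem_setOf_eq, mem_iUnion]
      constructor
      · intro h
        obtain ⟨n, hn⟩ := exists_nat_one_div_lt (sub_pos.mpr h)
        exact ⟨n, by linarith⟩
      · rintro ⟨n, hn⟩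
        have : (0 : ℝ) < 1 / (n + 1) := by positivity
        linarith
    rw [hunion]
    have hmono : Monotone (fun n : ℕ => {ω | Y ω ≤ s - 1 / (n + 1)}) := by
      intro n m hnm ω (h : Y ω ≤ s - 1 / (n + 1))
      have h1 : (1 : ℝ) / (m + 1) ≤ 1 / (n + 1) := by
        apply one_div_le_one_div_of_le (by positivity)
        exact_mod_cast by exact_mod_cast Nat.add_le_add_right hnm 1
      exact h.trans (by linarith)
    have htend := tendsto_measure_iUnion_atTop (μ := ℙ) hmono
    refine le_of_tendsto htend (Filter.Eventually.of_forall fun n => ?_)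
    have hmem : s - 1 / (n + 1 : ℝ) ∈ A := hIioA (by
      have : (0 : ℝ) < 1 / (n + 1) := by positivity
      simp only [mem_Iio]; linarith)
    exact (ENNReal.le_ofReal_iff_toReal_le (hfin _) ht0.le).mpr (le_of_lt hmem)

theorem depth_neg_moments {Ω : Type*} [MeasurableSpace Ω]
    (ℙ : Measure Ω) [IsProbabilityMeasure ℙ] (X : Ω → ℝ) (hX : Measurable X)
    (p : ℝ) (hp : p ∈ Set.Ioo (-1 : ℝ) 0) :
    1 ≤ ∫ ω, (depth1 ℙ X (X ω)) ^ p ∂ℙ ∧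
      ∫ ω, (depth1 ℙ X (X ω)) ^ p ∂ℙ ≤ ((2 : ℝ) ^ p * (p + 1))⁻¹ := by
  obtain ⟨hp1, hp0⟩ := hp
  have hpne : p ≠ 0 := hp0.ne
  have hpadd : (0:ℝ) < p + 1 := by linarith
  set q : Ω → ℝ := fun ω => depth1 ℙ X (X ω) with hqdef
  have hq_nonneg : ∀ ω, 0 ≤ q ω := fun ω =>
    le_min ENNReal.toReal_nonneg ENNReal.toReal_nonneg
  have hq_le_one : ∀ ω, q ω ≤ 1 := by
    intro ω
    refine (min_le_left _ _).trans ?_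
    simpa using ENNReal.toReal_mono ENNReal.one_ne_top (prob_le_one (μ := ℙ))
  -- measurability
  have hFm : Measurable fun x : ℝ => (ℙ {ω' | X ω' ≤ x}).toReal :=
    Monotone.measurable fun a b hab => ENNReal.toReal_mono (measure_ne_top _ _)
      (measure_mono fun ω' h => le_trans h hab)
  have hZm : Measurable fun x : ℝ => (ℙ {ω' | x ≤ X ω'}).toReal :=
    Antitone.measurable fun a b hab => ENNReal.toReal_mono (measure_ne_top _ _)
      (measure_mono fun ω' h => le_trans hab h)
  have hdm : Measurable (depth1 ℙ X) := hFm.min hZm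
  have hqm : Measurable q := hdm.comp hX
  have hGm : Measurable fun x : ℝ => if x = 0 then (0:ℝ) else Real.exp (Real.log x * p) :=
    Measurable.ite (measurableSet_eq) measurable_const
      (Real.measurable_exp.comp (Real.measurable_log.mul measurable_const))
  have hgm : Measurable fun ω => q ω ^ p := by
    have hfe : (fun ω => q ω ^ p) =
        (fun x : ℝ => if x = 0 then (0:ℝ) else Real.exp (Real.log x * p)) ∘ q := by
      funext ω
      rcases (hq_nonneg ω).lt_or_eq with h' | h'
      · simp only [Function.comp_apply, if_neg h'.ne', Real.rpow_def_of_pos h']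
      · rw [Function.comp_apply, ← h', Real.zero_rpow hpne]
        simp
    rw [hfe]
    exact hGm.comp hqm
  have hg_nonneg : ∀ ω, 0 ≤ q ω ^ p := fun ω => Real.rpow_nonneg (hq_nonneg ω) p
  -- tail bound
  have htail : ∀ u : ℝ, 0 ≤ u → ℙ {ω | q ω < u} ≤ ENNReal.ofReal (2 * u) := by
    intro u hu
    have hsub : {ω | q ω < u} ⊆ {ω | (ℙ {ω' | X ω' ≤ X ω}).toReal < u} ∪
        {ω | (ℙ {ω' | X ω ≤ X ω'}).toReal < u} := by
      intro ω hω
      have hω' : min (ℙ {ω' | X ω' ≤ X ω}).toReal (ℙ {ω' | X ω ≤ X ω'}).toReal < u := hω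
      rcases min_lt_iff.mp hω' with h | h
      · exact Or.inl h
      · exact Or.inr h
    refine (measure_mono hsub).trans ((measure_union_le _ _).trans ?_)
    have h1 := meas_cdf_lt ℙ X u
    have h2 := meas_cdf_lt ℙ (fun ω => -X ω) u
    simp only [neg_le_neg_iff] at h2
    rw [two_mul, ENNReal.ofReal_add hu hu]
    exact add_le_add h1 h2
  -- a.e. positivity
  have hnull : ℙ {ω | q ω ≤ 0} = 0 := by
    refine le_antisymm ?_ zero_le
    have htend : Filter.Tendsto (fun n : ℕ => ENNReal.ofReal (2 * (1 / (n + 1)))) Filter.atTop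
        (nhds 0) := by
      rw [show (0 : ENNReal) = ENNReal.ofReal (2 * 0) by simp]
      exact (ENNReal.continuous_ofReal.tendsto _).comp
        (tendsto_one_div_add_atTop_nhds_zero_nat.const_mul 2)
    refine ge_of_tendsto htend (Filter.Eventually.of_forall fun n => ?_)
    refine le_trans (measure_mono ?_) (htail (1 / (n + 1)) (by positivity))
    intro ω (hω : q ω ≤ 0)
    have : (0:ℝ) < 1 / (n + 1) := by positivity
    exact lt_of_le_of_lt hω this
  have hae : ∀ᵐ ω ∂ℙ, 0 < q ω := by
    rw [ae_iff]
    simpa [not_lt] using hnull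
  have hge1 : ∀ᵐ ω ∂ℙ, 1 ≤ q ω ^ p := by
    filter_upwards [hae] with ω hω
    exact Real.one_le_rpow_of_pos_of_le_one_of_nonpos hω (hq_le_one ω) hp0.le
  -- layer cake
  have hlc : ∫⁻ ω, ENNReal.ofReal (q ω ^ p) ∂ℙ = ∫⁻ t in Ioi (0:ℝ), ℙ {ω | t < q ω ^ p} :=
    lintegral_eq_lintegral_meas_lt ℙ (Filter.Eventually.of_forall hg_nonneg) hgm.aemeasurable
  -- the dominating function
  set c : ℝ := (2:ℝ) ^ (-p) with hcdef
  have hc : 0 < c := Real.rpow_pos_of_pos two_pos _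
  have h1p_neg : 1 / p < 0 := one_div_neg.mpr hp0
  have h1p : 1 / p < -1 := by
    rw [div_lt_iff_of_neg hp0]
    nlinarith
  have hc_half : c ^ (1 / p) = 1 / 2 := by
    rw [hcdef, ← Real.rpow_mul (by norm_num : (0:ℝ) ≤ 2)]
    have e2 : (-p) * (1 / p) = -1 := by field_simp
    rw [e2, Real.rpow_neg_one]
    norm_num
  set e : ℝ → ℝ := fun t => if t = 0 then (0:ℝ) else Real.exp (Real.log t * (1/p)) with hedef
  have hem : Measurable e :=
    Measurable.ite (measurableSet_eq) measurable_const
      (Real.measurable_exp.comp (Real.measurable_log.mul measurable_const))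
  have he_pos : ∀ t : ℝ, 0 < t → e t = t ^ (1 / p) := by
    intro t ht
    rw [hedef]
    simp only [if_neg ht.ne', Real.rpow_def_of_pos ht]
  set h : ℝ → ℝ := fun t => min 1 (2 * e t) with hhdef
  have hh_pos : ∀ t : ℝ, 0 < t → h t = min 1 (2 * t ^ (1 / p)) := by
    intro t ht
    rw [hhdef]
    simp only [he_pos t ht]
  have hh_nonneg : ∀ t : ℝ, 0 < t → 0 ≤ h t := by
    intro t ht
    rw [hh_pos t ht]
    have : (0:ℝ) ≤ t ^ (1/p) := Real.rpow_nonneg ht.le _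
    exact le_min zero_le_one (by linarith)
  have hhm : Measurable h := measurable_const.min (hem.const_mul 2)
  -- pointwise tail comparison
  have hbound : ∀ t ∈ Ioi (0:ℝ), ℙ {ω | t < q ω ^ p} ≤ ENNReal.ofReal (h t) := by
    intro t ht
    rw [mem_Ioi] at ht
    have hmin : ENNReal.ofReal (h t) =
        min (ENNReal.ofReal 1) (ENNReal.ofReal (2 * t ^ (1 / p))) := by
      rw [hh_pos t ht]
      rcases le_total (1:ℝ) (2 * t ^ (1 / p)) with hle | hle
      · simp only [min_eq_left hle, min_eq_left (ENNReal.ofReal_le_ofReal hle)]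
      · simp only [min_eq_right hle, min_eq_right (ENNReal.ofReal_le_ofReal hle)]
    rw [hmin]
    refine le_min (by simpa using prob_le_one (μ := ℙ)) ?_
    refine le_trans (measure_mono ?_) (htail (t ^ (1 / p)) (Real.rpow_nonneg ht.le _))
    intro ω (hω : t < q ω ^ p)
    have hqpos : 0 < q ω := by
      rcases (hq_nonneg ω).lt_or_eq with h' | h'
      · exact h'
      · exfalso
        rw [← h', Real.zero_rpow hpne] at hω
        exact absurd ht (not_lt.mpr hω.le)
    have hrw : (q ω ^ p) ^ (1 / p) = q ω := by
      rw [← Real.rpow_mul (hq_nonneg ω), mul_one_div, div_self hpne, Real.rpow_one]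
    show q ω < t ^ (1 / p)
    calc q ω = (q ω ^ p) ^ (1 / p) := hrw.symm
      _ < t ^ (1 / p) := Real.rpow_lt_rpow_of_neg ht hω h1p_neg
  -- compute the integral of h
  have heq1 : EqOn (fun _ : ℝ => (1:ℝ)) h (Ioc 0 c) := by
    intro t ht
    have h2t : (1:ℝ) ≤ 2 * t ^ (1 / p) := by
      have := Real.rpow_le_rpow_of_nonpos ht.1 ht.2 h1p_neg.le
      rw [hc_half] at this
      linarith
    rw [hh_pos t ht.1]
    simp only [min_eq_left h2t]
  have heq2 : EqOn (fun t : ℝ => 2 * t ^ (1 / p)) h (Ioi c) := by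
    intro t ht
    have h2t : 2 * t ^ (1 / p) ≤ 1 := by
      have := Real.rpow_le_rpow_of_nonpos hc (le_of_lt ht) h1p_neg.le
      rw [hc_half] at this
      linarith
    rw [hh_pos t (hc.trans ht)]
    simp only [min_eq_right h2t]
  have hInt1 : IntegrableOn h (Ioc 0 c) :=
    MeasureTheory.IntegrableOn.congr_fun
      (integrableOn_const measure_Ioc_lt_top.ne) heq1 measurableSet_Ioc
  have hInt2 : IntegrableOn h (Ioi c) :=
    MeasureTheory.IntegrableOn.congr_fun
      ((integrableOn_Ioi_rpow_of_lt h1p hc).const_mul 2) heq2 measurableSet_Ioi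
  have hsplit : Ioc (0:ℝ) c ∪ Ioi c = Ioi 0 := Ioc_union_Ioi_eq_Ioi hc.le
  have hIntTotal : IntegrableOn h (Ioi (0:ℝ)) := by
    rw [← hsplit]; exact hInt1.union hInt2
  have hval : ∫ t in Ioi (0:ℝ), h t = c / (p + 1) := by
    rw [← hsplit, setIntegral_union (Ioc_disjoint_Ioi le_rfl) measurableSet_Ioi hInt1 hInt2]
    have hv1 : ∫ t in Ioc (0:ℝ) c, h t = c := by
      rw [← setIntegral_congr_fun measurableSet_Ioc heq1]
      simp [Real.volume_Ioc, ENNReal.toReal_ofReal hc.le, hc.le]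
    have hv2 : ∫ t in Ioi c, h t = 2 * (-c ^ (1/p + 1) / (1/p + 1)) := by
      rw [← setIntegral_congr_fun measurableSet_Ioi heq2, integral_const_mul 2 _,
        integral_Ioi_rpow_of_lt h1p hc]
    rw [hv1, hv2]
    have hcp : c ^ (1/p + 1) = c / 2 := by
      have e1 : c ^ (1/p + 1) = (2:ℝ) ^ ((-p) * (1/p + 1)) := by
        rw [hcdef, ← Real.rpow_mul (by norm_num : (0:ℝ) ≤ 2)]
      have e2 : (-p) * (1/p + 1) = -1 + -p := by field_simp; ring
      rw [e1, e2, Real.rpow_add two_pos, ← hcdef, Real.rpow_neg_one]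
      ring
    rw [hcp]
    have h1p1 : 1/p + 1 = (p + 1) / p := by field_simp; ring
    rw [h1p1]
    field_simp
    ring
  have hfinal_eq : c / (p + 1) = ((2:ℝ) ^ p * (p + 1))⁻¹ := by
    rw [hcdef, Real.rpow_neg (by norm_num : (0:ℝ) ≤ 2), mul_inv, div_eq_mul_inv]
  -- assemble
  have hInonneg : (0:ℝ) ≤ c / (p + 1) := le_of_lt (div_pos hc hpadd)
  have hIle : ∫⁻ ω, ENNReal.ofReal (q ω ^ p) ∂ℙ ≤ ENNReal.ofReal (c / (p + 1)) := by
    rw [hlc]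
    have step1 : ∫⁻ t in Ioi (0:ℝ), ℙ {ω | t < q ω ^ p} ≤
        ∫⁻ t in Ioi (0:ℝ), ENNReal.ofReal (h t) := by
      refine setLIntegral_mono (ENNReal.measurable_ofReal.comp hhm) hbound
    refine step1.trans_eq ?_
    rw [← MeasureTheory.ofReal_integral_eq_lintegral_ofReal hIntTotal
      ((ae_restrict_iff' measurableSet_Ioi).mpr (Filter.Eventually.of_forall
        fun t ht => hh_nonneg t ht)), hval]
  have hI_ne_top : ∫⁻ ω, ENNReal.ofReal (q ω ^ p) ∂ℙ ≠ ⊤ :=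
    ne_top_of_le_ne_top ENNReal.ofReal_ne_top hIle
  have hrepr : ∫ ω, q ω ^ p ∂ℙ = (∫⁻ ω, ENNReal.ofReal (q ω ^ p) ∂ℙ).toReal :=
    integral_eq_lintegral_of_nonneg_ae (Filter.Eventually.of_forall hg_nonneg)
      hgm.aestronglyMeasurable
  constructor
  · rw [hrepr]
    have hIge : (1 : ENNReal) ≤ ∫⁻ ω, ENNReal.ofReal (q ω ^ p) ∂ℙ := by
      calc (1 : ENNReal) = ∫⁻ _, 1 ∂ℙ := by simp
        _ ≤ ∫⁻ ω, ENNReal.ofReal (q ω ^ p) ∂ℙ := by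
            refine lintegral_mono_ae ?_
            filter_upwards [hge1] with ω hω
            exact ENNReal.one_le_ofReal.mpr hω
    have := ENNReal.toReal_mono hI_ne_top hIge
    simpa using this
  · rw [hrepr, ← hfinal_eq]
    exact ENNReal.toReal_le_of_le_ofReal hInonneg hIle
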